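/- Let n ≥ 2, let f be a curvature function, let Ω ⊂ ℝⁿ be a domain, and let u ∈ C^∞(Ω) satisfy u > 0, A[u] positive definite in Ω, and f(κ[u]) = σ in Ω for a constant σ. Define φ(x) = u(x) − x·Du(x). Then φ lies in the kernel of the linearized operator: for every x ∈ Ω, the function t ↦ f(eigenvalues of A[u + tφ](x)) (which is defined for all t in a neighborhood of 0, since u(x)+tφ(x) > 0 and A[u+tφ](x) remains positive definite for small |t|) is differentiable at t = 0 with derivative equal to 0. -/

import Mathlib

open scoped Topology NNReal
open Filter Set

noncomputable section

/-- Euclidean `n`-space. -/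
abbrev En (n : ℕ) := EuclideanSpace ℝ (Fin n)

/-- The positive cone `K⁺ₙ`. -/
def posCone (n : ℕ) : Set (Fin n → ℝ) := {l | ∀ i, 0 < l i}

/-- A curvature function on the positive cone. -/
structure IsCurvatureFunction (n : ℕ) (f : (Fin n → ℝ) → ℝ) : Prop where
  smooth : ContDiffOn ℝ (⊤ : ℕ∞) f (posCone n)
  symm : ∀ (g : Equiv.Perm (Fin n)) (l : Fin n → ℝ), f (l ∘ g) = f l
  pos : ∀ l ∈ posCone n, 0 < f l
  zero_at_boundary : ∀ l₀ ∈ frontier (posCone n), Tendsto f (𝓝[posCone n] l₀) (𝓝 0)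
  deriv_pos : ∀ l ∈ posCone n, ∀ i : Fin n, 0 < fderiv ℝ f l (Pi.single i 1)
  concave : ConcaveOn ℝ (posCone n) f
  normalized : f (fun _ => 1) = 1
  homog : ∀ t : ℝ, 0 ≤ t → ∀ l ∈ posCone n, f (t • l) = t * f l

variable {n : ℕ}

/-- Gradient `Du` (components). -/
def Dg (u : En n → ℝ) (x : En n) : Fin n → ℝ :=
  fun i => fderiv ℝ u x (EuclideanSpace.single i 1)

/-- Hessian matrix `D²u`. -/
def Dh (u : En n → ℝ) (x : En n) : Matrix (Fin n) (Fin n) ℝ :=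
  Matrix.of fun i j =>
    fderiv ℝ (fun y => fderiv ℝ u y (EuclideanSpace.single j 1)) x (EuclideanSpace.single i 1)

/-- `w = √(1+|Du|²)`. -/
def wG (u : En n → ℝ) (x : En n) : ℝ := Real.sqrt (1 + ∑ i, Dg u x i ^ 2)

/-- The matrix `γ = (γ^{ij})`, the inverse square root of `I + Du Duᵀ`. -/
def gammaM (u : En n → ℝ) (x : En n) : Matrix (Fin n) (Fin n) ℝ :=
  1 - (wG u x * (1 + wG u x))⁻¹ • Matrix.of (fun i j => Dg u x i * Dg u x j)

/-- The matrix `A[u]` whose eigenvalues are the hyperbolic principal curvatures of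
the graph of `u`. -/
def hypA (u : En n → ℝ) (x : En n) : Matrix (Fin n) (Fin n) ℝ :=
  (wG u x)⁻¹ • (1 + u x • (gammaM u x * Dh u x * gammaM u x))

open Classical in
/-- Eigenvalues of a (symmetric) real matrix; junk value `0` if not symmetric. -/
def eigenvals {n : ℕ} (A : Matrix (Fin n) (Fin n) ℝ) : Fin n → ℝ :=
  if h : A.IsHermitian then h.eigenvalues else 0

/-- A solution of the asymptotic Plateau problem `f(κ) = σ` over `Ω`. -/
structure IsAPSolution (n : ℕ) (f : (Fin n → ℝ) → ℝ) (Ω : Set (En n)) (σ : ℝ)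
    (u : En n → ℝ) : Prop where
  smooth : ContDiffOn ℝ (⊤ : ℕ∞) u Ω
  cont : ContinuousOn u (closure Ω)
  pos : ∀ x ∈ Ω, 0 < u x
  bd : ∀ x ∈ frontier Ω, u x = 0
  posdef : ∀ x ∈ Ω, (hypA u x).PosDef
  curv_eq : ∀ x ∈ Ω, f (eigenvals (hypA u x)) = σ

/-- Port helper: current instance search fails to find the (norm-induced) edistance on
`K →L[ℝ] K →L[ℝ] ℝ` for a submodule `K`; this supplies the same instance explicitly. -/
instance instPEMetricCLMCLMSubmodule {E : Type*} [NormedAddCommGroup E] [InnerProductSpace ℝ E]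
    (K : Submodule ℝ E) : PseudoEMetricSpace (K →L[ℝ] K →L[ℝ] ℝ) :=
  (ContinuousLinearMap.toNormedAddCommGroup (E := K) (F := K →L[ℝ] ℝ) (𝕜 := ℝ) (𝕜₂ := ℝ)
    (σ₁₂ := RingHom.id ℝ)).toMetricSpace.toPseudoMetricSpace.toPseudoEMetricSpace

section Extras

variable {n : ℕ}

/-- Uniform exterior ball condition with radius `r`. -/
def UnifExtBall (Ω : Set (En n)) (r : ℝ) : Prop :=
  ∀ p ∈ frontier Ω, ∃ c : En n, Metric.ball c r ∩ Ω = ∅ ∧ dist p c = r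

/-- Uniform interior ball condition with radius `r`. -/
def UnifIntBall (Ω : Set (En n)) (r : ℝ) : Prop :=
  ∀ p ∈ frontier Ω, ∃ c : En n, Metric.ball c r ⊆ Ω ∧ dist p c = r

/-- `ν` is the outward unit normal to `∂Ω` at `p`: near `p`, after writing points as
`p + v + tν` with `v` in the tangent hyperplane, `Ω` is the region `t < -φ(v)` for a `C¹`
function `φ` with `φ(0) = 0`, `Dφ(0) = 0`. -/
def IsOutwardNormalAt (Ω : Set (En n)) (p ν : En n) : Prop :=
  ‖ν‖ = 1 ∧ ∃ r : ℝ, 0 < r ∧ ∃ φ : ↥((Submodule.span ℝ {ν})ᗮ) → ℝ,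
    φ 0 = 0 ∧ fderiv ℝ φ 0 = 0 ∧ ContDiffOn ℝ 1 φ (Metric.ball 0 r) ∧
    ∀ y ∈ Metric.ball p r,
      (y ∈ Ω ↔ @inner ℝ _ _ (y - p) ν
          < - φ ((Submodule.orthogonalProjectionOnto ((Submodule.span ℝ {ν})ᗮ)) (y - p)))

/-- `Ω` has `C¹` boundary. -/
def HasC1Boundary (Ω : Set (En n)) : Prop :=
  ∀ p ∈ frontier Ω, ∃ ν : En n, IsOutwardNormalAt Ω p ν

/-- `Ω` has `C²` boundary: near every boundary point `p`, `Ω` is the region above the graph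
of a `C²` function `φ` over the tangent hyperplane, where `ν` is the interior unit normal. -/
def HasC2Boundary (Ω : Set (En n)) : Prop :=
  ∀ p ∈ frontier Ω, ∃ ν : En n, ‖ν‖ = 1 ∧ ∃ r : ℝ, 0 < r ∧
    ∃ φ : ↥((Submodule.span ℝ {ν})ᗮ) → ℝ,
      φ 0 = 0 ∧ fderiv ℝ φ 0 = 0 ∧ ContDiffOn ℝ 2 φ (Metric.ball 0 r) ∧
      ∀ y ∈ Metric.ball p r,
        (y ∈ Ω ↔ φ ((Submodule.orthogonalProjectionOnto ((Submodule.span ℝ {ν})ᗮ)) (y - p))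
            < @inner ℝ _ _ (y - p) ν)

/-- `Ω` has `C^{2,α}` boundary: as `HasC2Boundary`, and additionally the second derivative of
the graph function is Hölder continuous of some exponent `α ∈ (0,1]`. -/
def HasC2alphaBoundary (Ω : Set (En n)) : Prop :=
  ∀ p ∈ frontier Ω, ∃ ν : En n, ‖ν‖ = 1 ∧ ∃ r : ℝ, 0 < r ∧
    ∃ φ : ↥((Submodule.span ℝ {ν})ᗮ) → ℝ,
      φ 0 = 0 ∧ fderiv ℝ φ 0 = 0 ∧ ContDiffOn ℝ 2 φ (Metric.ball 0 r) ∧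
      (∃ α C : ℝ≥0, 0 < α ∧ α ≤ 1 ∧
        HolderOnWith C α (fun v => fderiv ℝ (fun z => fderiv ℝ φ z) v) (Metric.ball 0 r)) ∧
      ∀ y ∈ Metric.ball p r,
        (y ∈ Ω ↔ φ ((Submodule.orthogonalProjectionOnto ((Submodule.span ℝ {ν})ᗮ)) (y - p))
            < @inner ℝ _ _ (y - p) ν)

/-- `Ω` is a mean convex domain with `C^{2,α}` boundary: near every boundary point, `Ω` is the
region above the graph of a `C^{2,α}` function `φ` over the tangent hyperplane (`ν` being the
interior unit normal, `Dφ(0) = 0`), with `Δφ(0) ≥ 0`. -/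
def IsMeanConvexC2alphaDomain (Ω : Set (En n)) : Prop :=
  ∀ p ∈ frontier Ω, ∃ ν : En n, ‖ν‖ = 1 ∧ ∃ r : ℝ, 0 < r ∧
    ∃ φ : ↥((Submodule.span ℝ {ν})ᗮ) → ℝ,
      φ 0 = 0 ∧ fderiv ℝ φ 0 = 0 ∧ ContDiffOn ℝ 2 φ (Metric.ball 0 r) ∧
      (∃ α C : ℝ≥0, 0 < α ∧ α ≤ 1 ∧
        HolderOnWith C α (fun v => fderiv ℝ (fun z => fderiv ℝ φ z) v) (Metric.ball 0 r)) ∧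
      (∀ y ∈ Metric.ball p r,
        (y ∈ Ω ↔ φ ((Submodule.orthogonalProjectionOnto ((Submodule.span ℝ {ν})ᗮ)) (y - p))
            < @inner ℝ _ _ (y - p) ν)) ∧
      (∃ b : OrthonormalBasis (Fin (n - 1)) ℝ ↥((Submodule.span ℝ {ν})ᗮ),
        0 ≤ ∑ i, fderiv ℝ (fun z => fderiv ℝ φ z (b i)) 0 (b i))

/-- Gradient with respect to a set (`fderivWithin`), used for derivatives up to the boundary. -/
def DgW (s : Set (En n)) (u : En n → ℝ) (x : En n) : Fin n → ℝ :=
  fun i => fderivWithin ℝ u s x (EuclideanSpace.single i 1)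

end Extras
section DeSitter

variable {n : ℕ}

/-- `w = √(1−|Dv|²)` for a spacelike graph. -/
def wDS (v : En n → ℝ) (x : En n) : ℝ := Real.sqrt (1 - ∑ i, Dg v x i ^ 2)

/-- The matrix `Dv Dvᵀ`. -/
def dyad (v : En n → ℝ) (x : En n) : Matrix (Fin n) (Fin n) ℝ :=
  Matrix.of fun i j => Dg v x i * Dg v x j

/-- Induced (de Sitter) metric of the spacelike graph of `v`. -/
def gDS (v : En n → ℝ) (x : En n) : Matrix (Fin n) (Fin n) ℝ :=
  (v x ^ 2)⁻¹ • (1 - dyad v x)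

/-- Second fundamental form of the spacelike graph of `v`. -/
def hDS (v : En n → ℝ) (x : En n) : Matrix (Fin n) (Fin n) ℝ :=
  (v x ^ 2 * wDS v x)⁻¹ • (1 - dyad v x - v x • Dh v x)

open scoped ComplexOrder in
/-- Port helper: `Matrix.PosSemidef.sqrt` is gone from Mathlib; this is its old definition. -/
def Matrix.PosSemidef.sqrt {𝕜 : Type*} [RCLike 𝕜] {m : Type*} [Fintype m] [DecidableEq m]
    {A : Matrix m m 𝕜} (hA : A.PosSemidef) : Matrix m m 𝕜 :=
  hA.1.eigenvectorUnitary.1 * Matrix.diagonal ((↑) ∘ (√·) ∘ hA.1.eigenvalues) *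
  (star hA.1.eigenvectorUnitary : Matrix m m 𝕜)

open Classical in
/-- `g^{-1/2} h g^{-1/2}`, whose eigenvalues are the de Sitter principal curvatures
of the spacelike graph of `v` (junk value `0` if `g` is not positive semidefinite). -/
def ADS (v : En n → ℝ) (x : En n) : Matrix (Fin n) (Fin n) ℝ :=
  if hg : (gDS v x).PosSemidef then hg.sqrt⁻¹ * hDS v x * hg.sqrt⁻¹ else 0

/-- The normalized `k`-th elementary symmetric function `H_k = e_k / C(n,k)`. -/
def Hk (n k : ℕ) (l : Fin n → ℝ) : ℝ :=
  (∑ s ∈ Finset.powersetCard k (Finset.univ : Finset (Fin n)), ∏ i ∈ s, l i) / (n.choose k)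

end DeSitter
end


set_option linter.unusedSectionVars false

noncomputable section
namespace S10
open Matrix

variable {n : ℕ}

def sortv (v : Fin n → ℝ) : Fin n → ℝ := v ∘ Tuple.sort v

def ray (A : Matrix (Fin n) (Fin n) ℝ) (x : Fin n → ℝ) : ℝ := x ⬝ᵥ (A *ᵥ x)

def evec {A : Matrix (Fin n) (Fin n) ℝ} (hA : A.IsHermitian) (j : Fin n) : Fin n → ℝ :=
  fun i => hA.eigenvectorBasis j i

variable {A B : Matrix (Fin n) (Fin n) ℝ}

def coordv (hA : A.IsHermitian) (x : Fin n → ℝ) : Fin n → ℝ :=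
  (star (hA.eigenvectorUnitary : Matrix (Fin n) (Fin n) ℝ)) *ᵥ x

lemma vecMul_eq_star_mulVec (U : Matrix (Fin n) (Fin n) ℝ) (y : Fin n → ℝ) :
    y ᵥ* U = star U *ᵥ y := by
  funext i
  simp [vecMul, mulVec, dotProduct, mul_comm]

lemma mulVec_coordv (hA : A.IsHermitian) (x : Fin n → ℝ) :
    (hA.eigenvectorUnitary : Matrix (Fin n) (Fin n) ℝ) *ᵥ coordv hA x = x := by
  rw [coordv, mulVec_mulVec, Matrix.mem_unitaryGroup_iff.mp (hA.eigenvectorUnitary).2, one_mulVec]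

lemma ray_eq_sum (hA : A.IsHermitian) (x : Fin n → ℝ) :
    ray A x = ∑ j, hA.eigenvalues j * (coordv hA x j)^2 := by
  set U : Matrix (Fin n) (Fin n) ℝ := (hA.eigenvectorUnitary : Matrix (Fin n) (Fin n) ℝ) with hU
  have hsp := hA.spectral_theorem
  have : ray A x = x ⬝ᵥ (U *ᵥ (diagonal hA.eigenvalues *ᵥ coordv hA x)) := by
    rw [ray]
    nth_rewrite 1 [hsp]
    simp only [← mulVec_mulVec, coordv]
    norm_num [Function.comp]
    rw [Matrix.mul_assoc]
  rw [this, Matrix.dotProduct_mulVec x U, vecMul_eq_star_mulVec, ← coordv]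
  simp [Matrix.mulVec_diagonal, dotProduct, pow_two, mul_comm, mul_assoc, mul_left_comm]

lemma dot_eq_sum_coordv (hA : A.IsHermitian) (x : Fin n → ℝ) :
    x ⬝ᵥ x = ∑ j, (coordv hA x j)^2 := by
  set U : Matrix (Fin n) (Fin n) ℝ := (hA.eigenvectorUnitary : Matrix (Fin n) (Fin n) ℝ) with hU
  have h1 : x ⬝ᵥ x = coordv hA x ⬝ᵥ coordv hA x := by
    nth_rewrite 1 [← mulVec_coordv hA x]
    rw [dotProduct_comm, Matrix.dotProduct_mulVec, vecMul_eq_star_mulVec, ← coordv]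
  rw [h1]
  simp [dotProduct, pow_two]


variable {n : ℕ}
variable {A B : Matrix (Fin n) (Fin n) ℝ}










lemma coordv_evec (hA : A.IsHermitian) (j : Fin n) :
    coordv hA (evec hA j) = Pi.single j 1 := hA.star_eigenvectorUnitary_mulVec j

lemma coordv_eq_zero_of_mem_span (hA : A.IsHermitian) (S : Finset (Fin n)) {x : Fin n → ℝ}
    (hx : x ∈ Submodule.span ℝ (Set.range (fun i : S => evec hA i.1)))
    {j : Fin n} (hj : j ∉ S) : coordv hA x j = 0 := by
  rcases (Submodule.mem_span_range_iff_exists_fun ℝ).mp hx with ⟨a, rfl⟩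
  have : coordv hA (∑ i : S, a i • evec hA i.1) =
      ∑ i : S, a i • coordv hA (evec hA i.1) := by
    show (star (hA.eigenvectorUnitary : Matrix (Fin n) (Fin n) ℝ)).mulVecLin _ = _
    rw [map_sum]
    simp [coordv]
  rw [this]
  simp only [coordv_evec]
  rw [Finset.sum_apply]
  apply Finset.sum_eq_zero
  intro i _
  have : i.1 ≠ j := fun h => hj (h ▸ i.2)
  simp [Pi.single_apply, this.symm]

lemma linearIndependent_evec (hA : A.IsHermitian) (S : Finset (Fin n)) :
    LinearIndependent ℝ (fun i : S => evec hA i.1) := by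
  have h2 : LinearIndependent ℝ (fun i : S => Pi.single (M := fun _ : Fin n => ℝ) i.1 (1:ℝ)) := by
    have := (Pi.basisFun ℝ (Fin n)).linearIndependent
    have h3 := this.comp (fun i : S => i.1) Subtype.val_injective
    have he : (⇑(Pi.basisFun ℝ (Fin n)) ∘ fun i : S => i.1) =
        fun i : S => Pi.single (M := fun _ : Fin n => ℝ) i.1 (1:ℝ) := by
      funext i; simp [Pi.basisFun_apply]
    rwa [he] at h3
  refine LinearIndependent.of_comp
    ((star (hA.eigenvectorUnitary : Matrix (Fin n) (Fin n) ℝ)).mulVecLin) ?_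
  have : ((star (hA.eigenvectorUnitary : Matrix (Fin n) (Fin n) ℝ)).mulVecLin) ∘
      (fun i : S => evec hA i.1) = fun i : S => Pi.single i.1 (1:ℝ) := by
    funext i; exact coordv_evec hA i.1
  rw [this]; exact h2

lemma finrank_span_evec (hA : A.IsHermitian) (S : Finset (Fin n)) :
    Module.finrank ℝ (Submodule.span ℝ (Set.range (fun i : S => evec hA i.1))) = S.card := by
  rw [finrank_span_eq_card (linearIndependent_evec hA S)]
  simp

lemma ray_le_of_mem_span (hA : A.IsHermitian) (S : Finset (Fin n)) (m : ℝ)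
    (hm : ∀ j ∈ S, hA.eigenvalues j ≤ m) {x : Fin n → ℝ}
    (hx : x ∈ Submodule.span ℝ (Set.range (fun i : S => evec hA i.1))) :
    ray A x ≤ m * (x ⬝ᵥ x) := by
  rw [ray_eq_sum hA, dot_eq_sum_coordv hA, Finset.mul_sum]
  have hz : ∀ j ∈ (Finset.univ : Finset (Fin n)), j ∉ S →
      hA.eigenvalues j * (coordv hA x j)^2 = 0 := by
    intro j _ hj; rw [coordv_eq_zero_of_mem_span hA S hx hj]; ring
  have hz' : ∀ j ∈ (Finset.univ : Finset (Fin n)), j ∉ S → m * (coordv hA x j)^2 = 0 := by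
    intro j _ hj; rw [coordv_eq_zero_of_mem_span hA S hx hj]; ring
  rw [← Finset.sum_subset (Finset.subset_univ S) hz, ← Finset.sum_subset (Finset.subset_univ S) hz']
  apply Finset.sum_le_sum
  intro j hj
  exact mul_le_mul_of_nonneg_right (hm j hj) (sq_nonneg _)

lemma ray_ge_of_mem_span (hA : A.IsHermitian) (S : Finset (Fin n)) (m : ℝ)
    (hm : ∀ j ∈ S, m ≤ hA.eigenvalues j) {x : Fin n → ℝ}
    (hx : x ∈ Submodule.span ℝ (Set.range (fun i : S => evec hA i.1))) :
    m * (x ⬝ᵥ x) ≤ ray A x := by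
  rw [ray_eq_sum hA, dot_eq_sum_coordv hA, Finset.mul_sum]
  have hz : ∀ j ∈ (Finset.univ : Finset (Fin n)), j ∉ S →
      hA.eigenvalues j * (coordv hA x j)^2 = 0 := by
    intro j _ hj; rw [coordv_eq_zero_of_mem_span hA S hx hj]; ring
  have hz' : ∀ j ∈ (Finset.univ : Finset (Fin n)), j ∉ S → m * (coordv hA x j)^2 = 0 := by
    intro j _ hj; rw [coordv_eq_zero_of_mem_span hA S hx hj]; ring
  rw [← Finset.sum_subset (Finset.subset_univ S) hz, ← Finset.sum_subset (Finset.subset_univ S) hz']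
  apply Finset.sum_le_sum
  intro j hj
  exact mul_le_mul_of_nonneg_right (hm j hj) (sq_nonneg _)


lemma sortv_mono (v : Fin n → ℝ) : Monotone (sortv v) := Tuple.monotone_sort v

lemma dotProduct_self_pos {x : Fin n → ℝ} (hx : x ≠ 0) : 0 < x ⬝ᵥ x := by
  have h1 : ∃ i, x i ≠ 0 := by
    by_contra h; push_neg at h; exact hx (funext h)
  rcases h1 with ⟨i, hi⟩
  rw [dotProduct]
  apply Finset.sum_pos' (fun j _ => mul_self_nonneg _)
  exact ⟨i, Finset.mem_univ i, by have := mul_self_pos.mpr hi; simpa using this⟩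

lemma weyl_le (hA : A.IsHermitian) (hB : B.IsHermitian) (ε : ℝ)
    (h : ∀ x : Fin n → ℝ, ray A x ≤ ray B x + ε * (x ⬝ᵥ x)) (k : Fin n) :
    sortv hA.eigenvalues k ≤ sortv hB.eigenvalues k + ε := by
  classical
  set σa := Tuple.sort hA.eigenvalues with hσa
  set σb := Tuple.sort hB.eigenvalues with hσb
  set SA : Finset (Fin n) := (Finset.Ici k).image σa with hSA
  set SB : Finset (Fin n) := (Finset.Iic k).image σb with hSB
  have hcardA : SA.card = n - k.1 := by
    rw [hSA, Finset.card_image_of_injective _ σa.injective, Fin.card_Ici]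
  have hcardB : SB.card = k.1 + 1 := by
    rw [hSB, Finset.card_image_of_injective _ σb.injective, Fin.card_Iic]
  set VA := Submodule.span ℝ (Set.range (fun i : SA => evec hA i.1)) with hVA
  set VB := Submodule.span ℝ (Set.range (fun i : SB => evec hB i.1)) with hVB
  have hrA : Module.finrank ℝ VA = n - k.1 := by rw [hVA, finrank_span_evec, hcardA]
  have hrB : Module.finrank ℝ VB = k.1 + 1 := by rw [hVB, finrank_span_evec, hcardB]
  have hsum := Submodule.finrank_sup_add_finrank_inf_eq VA VB
  have hle : Module.finrank ℝ ↥(VA ⊔ VB) ≤ n := by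
    have := Submodule.finrank_le (VA ⊔ VB)
    rwa [Module.finrank_fin_fun] at this
  have hinf : 0 < Module.finrank ℝ ↥(VA ⊓ VB) := by
    have hk := k.2
    omega
  have hne : VA ⊓ VB ≠ ⊥ := by
    intro hbot
    rw [hbot, finrank_bot] at hinf
    exact lt_irrefl 0 hinf
  rcases Submodule.exists_mem_ne_zero_of_ne_bot hne with ⟨x, hxmem, hxne⟩
  have hxA : x ∈ VA := hxmem.1
  have hxB : x ∈ VB := hxmem.2
  have hgeA : sortv hA.eigenvalues k * (x ⬝ᵥ x) ≤ ray A x := by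
    apply ray_ge_of_mem_span hA SA _ _ hxA
    intro j hj
    rcases Finset.mem_image.mp hj with ⟨i, hi, rfl⟩
    exact sortv_mono hA.eigenvalues (Finset.mem_Ici.mp hi)
  have hleB : ray B x ≤ sortv hB.eigenvalues k * (x ⬝ᵥ x) := by
    apply ray_le_of_mem_span hB SB _ _ hxB
    intro j hj
    rcases Finset.mem_image.mp hj with ⟨i, hi, rfl⟩
    exact sortv_mono hB.eigenvalues (Finset.mem_Iic.mp hi)
  have hd := dotProduct_self_pos hxne
  have : sortv hA.eigenvalues k * (x ⬝ᵥ x) ≤ (sortv hB.eigenvalues k + ε) * (x ⬝ᵥ x) := by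
    calc sortv hA.eigenvalues k * (x ⬝ᵥ x) ≤ ray A x := hgeA
    _ ≤ ray B x + ε * (x ⬝ᵥ x) := h x
    _ ≤ sortv hB.eigenvalues k * (x ⬝ᵥ x) + ε * (x ⬝ᵥ x) := by linarith
    _ = (sortv hB.eigenvalues k + ε) * (x ⬝ᵥ x) := by ring
  exact le_of_mul_le_mul_right this hd

def entSum (M : Matrix (Fin n) (Fin n) ℝ) : ℝ := ∑ i, ∑ j, |M i j|

lemma entSum_nonneg (M : Matrix (Fin n) (Fin n) ℝ) : 0 ≤ entSum M := by
  apply Finset.sum_nonneg; intro i _; apply Finset.sum_nonneg; intro j _; exact abs_nonneg _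

lemma abs_ray_le (M : Matrix (Fin n) (Fin n) ℝ) (x : Fin n → ℝ) :
    |ray M x| ≤ entSum M * (x ⬝ᵥ x) := by
  have hxx : ∀ i j : Fin n, |x i * x j| ≤ x ⬝ᵥ x := by
    intro i j
    have h1 : 2 * |x i| * |x j| ≤ |x i|^2 + |x j|^2 := two_mul_le_add_sq _ _
    have h2 : (x i)^2 ≤ x ⬝ᵥ x := by
      rw [dotProduct, pow_two]
      exact Finset.single_le_sum (f := fun l => x l * x l)
        (fun l _ => mul_self_nonneg (x l)) (Finset.mem_univ i)
    have h3 : (x j)^2 ≤ x ⬝ᵥ x := by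
      rw [dotProduct, pow_two]
      exact Finset.single_le_sum (f := fun l => x l * x l)
        (fun l _ => mul_self_nonneg (x l)) (Finset.mem_univ j)
    rw [abs_mul]
    nlinarith [sq_abs (x i), sq_abs (x j)]
  have hrw : ray M x = ∑ i, ∑ j, x i * M i j * x j := by
    rw [ray, dotProduct]
    apply Finset.sum_congr rfl
    intro i _
    rw [mulVec, dotProduct, Finset.mul_sum]
    apply Finset.sum_congr rfl
    intro j _
    ring
  rw [hrw, entSum, Finset.sum_mul]
  calc |∑ i, ∑ j, x i * M i j * x j| ≤ ∑ i, |∑ j, x i * M i j * x j| :=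
        Finset.abs_sum_le_sum_abs _ _
  _ ≤ ∑ i, ∑ j, |x i * M i j * x j| := by
      apply Finset.sum_le_sum; intro i _; exact Finset.abs_sum_le_sum_abs _ _
  _ ≤ ∑ i, (∑ j, |M i j|) * (x ⬝ᵥ x) := by
      apply Finset.sum_le_sum; intro i _
      rw [Finset.sum_mul]
      apply Finset.sum_le_sum; intro j _
      have : |x i * M i j * x j| = |M i j| * |x i * x j| := by
        rw [← abs_mul]; ring_nf
      rw [this]
      exact mul_le_mul_of_nonneg_left (hxx i j) (abs_nonneg _)

lemma ray_sub (x : Fin n → ℝ) : ray (A - B) x = ray A x - ray B x := by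
  simp [ray, sub_mulVec, dotProduct_sub]

lemma weyl_abs (hA : A.IsHermitian) (hB : B.IsHermitian) (k : Fin n) :
    |sortv hA.eigenvalues k - sortv hB.eigenvalues k| ≤ entSum (A - B) := by
  have h1 : sortv hA.eigenvalues k ≤ sortv hB.eigenvalues k + entSum (A - B) := by
    apply weyl_le hA hB
    intro x
    have := (abs_le.mp (abs_ray_le (A - B) x)).2
    rw [ray_sub] at this
    linarith
  have h2 : sortv hB.eigenvalues k ≤ sortv hA.eigenvalues k + entSum (A - B) := by
    apply weyl_le hB hA
    intro x
    have := (abs_le.mp (abs_ray_le (A - B) x)).1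
    rw [ray_sub] at this
    linarith
  rw [abs_sub_le_iff]
  constructor <;> linarith


lemma sortv_surj_index {v : Fin n → ℝ} (h : ∀ k, 0 < sortv v k) : ∀ j, 0 < v j := by
  intro j
  have := h ((Tuple.sort v)⁻¹ j)
  simpa [sortv] using this

lemma posDef_of_sortv_pos {A : Matrix (Fin n) (Fin n) ℝ} (hA : A.IsHermitian)
    (h : ∀ k, 0 < sortv hA.eigenvalues k) : A.PosDef := by
  have hev : ∀ j, 0 < hA.eigenvalues j := sortv_surj_index h
  refine Matrix.PosDef.of_dotProduct_mulVec_pos hA (fun x hx => ?_)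
  have hsx : star x = x := by funext i; simp
  have hc : coordv hA x ≠ 0 := by
    intro h0
    apply hx
    have := mulVec_coordv hA x
    rw [h0] at this
    simpa using this.symm
  obtain ⟨j, hj⟩ : ∃ j, coordv hA x j ≠ 0 := by
    by_contra hco; push_neg at hco; exact hc (funext hco)
  have key : 0 < ray A x := by
    rw [ray_eq_sum hA]
    apply Finset.sum_pos' (fun l _ => mul_nonneg (hev l).le (sq_nonneg _))
    exact ⟨j, Finset.mem_univ j, mul_pos (hev j) (by positivity)⟩
  rw [hsx]
  exact key









def wf (b : Fin n → ℝ) : ℝ := Real.sqrt (1 + ∑ i, b i ^ 2)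
def gf (b : Fin n → ℝ) : Matrix (Fin n) (Fin n) ℝ :=
  1 - (wf b * (1 + wf b))⁻¹ • Matrix.of (fun i j => b i * b j)
def Hfun (a : ℝ) (b : Fin n → ℝ) (c : Fin n → Fin n → ℝ) : Matrix (Fin n) (Fin n) ℝ :=
  (wf b)⁻¹ • (1 + a • (gf b * Matrix.of c * gf b))

lemma hypA_eq (v : En n → ℝ) (x : En n) :
    hypA v x = Hfun (v x) (Dg v x) (fun i j => Dh v x i j) := rfl

example (L : En n →L[ℝ] ℝ) (x : En n) : L x = ∑ j, x j * L (EuclideanSpace.single j 1) := by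
  have hx : x = ∑ j, x j • EuclideanSpace.single j (1:ℝ) := by
    have := (EuclideanSpace.basisFun (Fin n) ℝ).sum_repr x
    simp only [EuclideanSpace.basisFun_repr, EuclideanSpace.basisFun_apply] at this
    exact this.symm
  nth_rewrite 1 [hx]
  rw [map_sum]
  simp

example (i : Fin n) : ContDiff ℝ ⊤ (fun x : En n => x i) := by fun_prop

example (v : ℝ → Fin n → ℝ) (v' : Fin n → ℝ) (hv : ∀ i, HasDerivAt (fun t => v t i) (v' i) 0) :
    HasDerivAt v v' 0 := hasDerivAt_pi.mpr hv

example : dist (3:ℝ) 0 = |3| := Real.dist_0_eq_abs _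

lemma wf_pos (b : Fin n → ℝ) : 0 < wf b := by
  apply Real.sqrt_pos.mpr
  have : (0:ℝ) ≤ ∑ i, b i ^ 2 := Finset.sum_nonneg fun i _ => sq_nonneg _
  linarith

lemma Hfun_scale {s : ℝ} (hs : s ≠ 0) (a : ℝ) (b : Fin n → ℝ) (c : Fin n → Fin n → ℝ) :
    Hfun (s * a) b (fun i j => s⁻¹ * c i j) = Hfun a b c := by
  unfold Hfun
  congr 2
  have hof : Matrix.of (fun i j => s⁻¹ * c i j) = s⁻¹ • Matrix.of c := by
    ext i j; simp
  rw [hof, Matrix.mul_smul, Matrix.smul_mul, smul_smul]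
  have hsa : s * a * s⁻¹ = a := by field_simp
  rw [hsa]

lemma gf_symm (b : Fin n → ℝ) : (gf b).IsHermitian := by
  unfold gf
  have h1 : (Matrix.of fun i j => b i * b j).IsHermitian := by
    rw [Matrix.IsHermitian]; ext i j
    simp [Matrix.conjTranspose_apply, mul_comm]
  have h2 : ((wf b * (1 + wf b))⁻¹ • Matrix.of fun i j => b i * b j).IsHermitian := by
    rw [Matrix.IsHermitian, Matrix.conjTranspose_smul, h1, star_trivial]
  exact Matrix.isHermitian_one.sub h2

lemma Hfun_herm (a : ℝ) (b : Fin n → ℝ) (c : Fin n → Fin n → ℝ)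
    (hc : ∀ i j, c i j = c j i) : (Hfun a b c).IsHermitian := by
  unfold Hfun
  have hcherm : (Matrix.of c).IsHermitian := by
    rw [Matrix.IsHermitian]; ext i j; simp [Matrix.conjTranspose_apply, hc i j]
  have h3 : (gf b * Matrix.of c * gf b).IsHermitian := by
    rw [Matrix.IsHermitian, Matrix.conjTranspose_mul, Matrix.conjTranspose_mul,
      gf_symm b, hcherm, Matrix.mul_assoc]
  have h4 : (a • (gf b * Matrix.of c * gf b)).IsHermitian := by
    rw [Matrix.IsHermitian, Matrix.conjTranspose_smul, h3, star_trivial]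
  have h5 : ((1 : Matrix (Fin n) (Fin n) ℝ) + a • (gf b * Matrix.of c * gf b)).IsHermitian :=
    Matrix.isHermitian_one.add h4
  rw [Matrix.IsHermitian, Matrix.conjTranspose_smul, h5, star_trivial]

/-- uncurried version acting on plain data -/
def HfunP : (ℝ × (Fin n → ℝ) × (Fin n → Fin n → ℝ)) → (Fin n → Fin n → ℝ) :=
  fun p i j => Hfun p.1 p.2.1 p.2.2 i j

lemma contDiff_wf : ContDiff ℝ ⊤ (fun b : Fin n → ℝ => wf b) := by
  rw [contDiff_iff_contDiffAt]
  intro b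
  have hinner : ContDiff ℝ ⊤ (fun b : Fin n → ℝ => 1 + ∑ i, b i ^ 2) :=
    contDiff_const.add (ContDiff.sum fun i _ => ((ContinuousLinearMap.proj i :
      (Fin n → ℝ) →L[ℝ] ℝ).contDiff).pow 2)
  have hpos : (0:ℝ) < 1 + ∑ i, b i ^ 2 := by
    have : (0:ℝ) ≤ ∑ i, b i ^ 2 := Finset.sum_nonneg fun i _ => sq_nonneg _
    linarith
  exact (Real.contDiffAt_sqrt hpos.ne').comp b hinner.contDiffAt

lemma contDiff_HfunP : ContDiff ℝ ⊤ (HfunP (n := n)) := by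
  apply contDiff_pi.mpr; intro i; apply contDiff_pi.mpr; intro j
  have hb : ContDiff ℝ ⊤ (fun p : ℝ × (Fin n → ℝ) × (Fin n → Fin n → ℝ) => p.2.1) :=
    contDiff_fst.comp contDiff_snd
  have hwf : ContDiff ℝ ⊤ (fun p : ℝ × (Fin n → ℝ) × (Fin n → Fin n → ℝ) => wf p.2.1) :=
    contDiff_wf.comp hb
  have hwfi : ContDiff ℝ ⊤ (fun p : ℝ × (Fin n → ℝ) × (Fin n → Fin n → ℝ) => (wf p.2.1)⁻¹ ) :=
    hwf.inv (fun p => (wf_pos _).ne')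
  have hbk : ∀ k : Fin n, ContDiff ℝ ⊤
      (fun p : ℝ × (Fin n → ℝ) × (Fin n → Fin n → ℝ) => p.2.1 k) := fun k =>
    (ContinuousLinearMap.proj k : (Fin n → ℝ) →L[ℝ] ℝ).contDiff.comp hb
  have hgf : ∀ k l : Fin n, ContDiff ℝ ⊤
      (fun p : ℝ × (Fin n → ℝ) × (Fin n → Fin n → ℝ) => gf p.2.1 k l) := by
    intro k l
    have : (fun p : ℝ × (Fin n → ℝ) × (Fin n → Fin n → ℝ) => gf p.2.1 k l)
        = fun p => (if k = l then (1:ℝ) else 0) -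
          (wf p.2.1 * (1 + wf p.2.1))⁻¹ * (p.2.1 k * p.2.1 l) := by
      funext p
      simp [gf, Matrix.sub_apply, Matrix.smul_apply, Matrix.one_apply, smul_eq_mul]
    rw [this]
    apply ContDiff.sub contDiff_const
    apply ContDiff.mul
    · apply ContDiff.inv (hwf.mul (contDiff_const.add hwf))
      intro p
      have h1 := wf_pos (n := n) p.2.1
      positivity
    · exact (hbk k).mul (hbk l)
  have hck : ∀ k l : Fin n, ContDiff ℝ ⊤
      (fun p : ℝ × (Fin n → ℝ) × (Fin n → Fin n → ℝ) => p.2.2 k l) := by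
    intro k l
    exact (ContinuousLinearMap.proj l : (Fin n → ℝ) →L[ℝ] ℝ).contDiff.comp
      ((ContinuousLinearMap.proj k : (Fin n → (Fin n → ℝ)) →L[ℝ] (Fin n → ℝ)).contDiff.comp
        (contDiff_snd.comp contDiff_snd))
  have hexp : (fun p : ℝ × (Fin n → ℝ) × (Fin n → Fin n → ℝ) => HfunP p i j) =
      fun p => (wf p.2.1)⁻¹ * ((if i = j then (1:ℝ) else 0) +
        p.1 * (∑ l, (∑ k, gf p.2.1 i k * p.2.2 k l) * gf p.2.1 l j)) := by
    funext p
    simp only [HfunP, Hfun, Matrix.smul_apply, Matrix.add_apply, Matrix.one_apply,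
      smul_eq_mul, Matrix.mul_apply, Matrix.of_apply]
  rw [hexp]
  apply hwfi.mul
  apply ContDiff.add contDiff_const
  apply contDiff_fst.mul
  apply ContDiff.sum; intro l _
  apply ContDiff.mul _ (hgf l j)
  apply ContDiff.sum; intro k _
  exact (hgf i k).mul (hck k l)

section DerivSec
variable {Ω : Set (En n)} {u : En n → ℝ} {x y : En n}

def sing {n : ℕ} (i : Fin n) : En n := EuclideanSpace.single i (1:ℝ)

lemma clm_expand (L : En n →L[ℝ] ℝ) (x : En n) : L x = ∑ j, x j * L (sing j) := by
  have hx : x = ∑ j, x j • EuclideanSpace.single j (1:ℝ) := by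
    have := (EuclideanSpace.basisFun (Fin n) ℝ).sum_repr x
    simp only [EuclideanSpace.basisFun_repr, EuclideanSpace.basisFun_apply] at this
    exact this.symm
  nth_rewrite 1 [hx]
  rw [map_sum]
  simp [sing]

variable (hΩo : IsOpen Ω) (hu : ContDiffOn ℝ (⊤ : ℕ∞) u Ω)

lemma top_add_one : (((⊤:ℕ∞) : WithTop ℕ∞) + 1 ≤ ((⊤:ℕ∞) : WithTop ℕ∞)) := by
  norm_num

lemma one_le_top' : ((1:WithTop ℕ∞) ≤ ((⊤:ℕ∞) : WithTop ℕ∞)) := by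
  norm_num

include hΩo hu

lemma cAt0 (hy : y ∈ Ω) : ContDiffAt ℝ (⊤:ℕ∞) u y := (hu y hy).contDiffAt (hΩo.mem_nhds hy)

lemma cAt1 (hy : y ∈ Ω) : ContDiffAt ℝ (⊤:ℕ∞) (fderiv ℝ u) y :=
  (cAt0 hΩo hu hy).fderiv_right top_add_one

lemma cAt2 (hy : y ∈ Ω) : ContDiffAt ℝ (⊤:ℕ∞) (fderiv ℝ (fderiv ℝ u)) y :=
  (cAt1 hΩo hu hy).fderiv_right top_add_one

lemma d0 (hy : y ∈ Ω) : DifferentiableAt ℝ u y :=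
  (cAt0 hΩo hu hy).differentiableAt (by simp)

lemma d1 (hy : y ∈ Ω) : DifferentiableAt ℝ (fderiv ℝ u) y :=
  (cAt1 hΩo hu hy).differentiableAt (by simp)

lemma d2 (hy : y ∈ Ω) : DifferentiableAt ℝ (fderiv ℝ (fderiv ℝ u)) y :=
  (cAt2 hΩo hu hy).differentiableAt (by simp)

/-- Clairaut at any point of Ω -/
lemma sym2 (hy : y ∈ Ω) (v w : En n) :
    fderiv ℝ (fderiv ℝ u) y v w = fderiv ℝ (fderiv ℝ u) y w v := by
  apply second_derivative_symmetric_of_eventually (𝕜 := ℝ)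
    (f := u) (f' := fderiv ℝ u)
  · filter_upwards [hΩo.mem_nhds hy] with z hz using (d0 hΩo hu hz).hasFDerivAt
  · exact (d1 hΩo hu hy).hasFDerivAt

/-- symmetry of the third derivative in slots 1-2 -/
lemma sym3a (hy : y ∈ Ω) (v w : En n) :
    fderiv ℝ (fderiv ℝ (fderiv ℝ u)) y v w = fderiv ℝ (fderiv ℝ (fderiv ℝ u)) y w v := by
  apply second_derivative_symmetric_of_eventually (𝕜 := ℝ)
    (f := fderiv ℝ u) (f' := fderiv ℝ (fderiv ℝ u))
  · filter_upwards [hΩo.mem_nhds hy] with z hz using (d1 hΩo hu hz).hasFDerivAt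
  · exact (d2 hΩo hu hy).hasFDerivAt

/-- derivative of the second derivative applied to fixed vectors -/
lemma hasF_D2app (hy : y ∈ Ω) (b c : En n) :
    HasFDerivAt (fun z => fderiv ℝ (fderiv ℝ u) z b c)
      (((fderiv ℝ (fderiv ℝ (fderiv ℝ u)) y).flip b).flip c) y := by
  have h1 : HasFDerivAt (fun z => fderiv ℝ (fderiv ℝ u) z b)
      ((fderiv ℝ (fderiv ℝ (fderiv ℝ u)) y).flip b) y := by
    have := (d2 hΩo hu hy).hasFDerivAt.clm_apply (hasFDerivAt_const b y)
    simpa using this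
  have h2 := h1.clm_apply (hasFDerivAt_const c y)
  simpa using h2

/-- symmetry of the third derivative in slots 2-3 -/
lemma sym3bc (hy : y ∈ Ω) (a b c : En n) :
    fderiv ℝ (fderiv ℝ (fderiv ℝ u)) y a b c = fderiv ℝ (fderiv ℝ (fderiv ℝ u)) y a c b := by
  have hev : (fun z => fderiv ℝ (fderiv ℝ u) z b c) =ᶠ[𝓝 y]
      (fun z => fderiv ℝ (fderiv ℝ u) z c b) := by
    filter_upwards [hΩo.mem_nhds hy] with z hz using sym2 hΩo hu hz b c
  have e1 := (hasF_D2app hΩo hu hy b c).fderiv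
  have e2 := (hasF_D2app hΩo hu hy c b).fderiv
  have e3 := hev.fderiv_eq (𝕜 := ℝ)
  rw [e1, e2] at e3
  have := congrFun (congrArg (fun (L : En n →L[ℝ] ℝ) => (L : En n → ℝ)) e3) a
  simpa using this

/-- full symmetry: move third slot to front -/
lemma sym3 (hy : y ∈ Ω) (a b c : En n) :
    fderiv ℝ (fderiv ℝ (fderiv ℝ u)) y a b c = fderiv ℝ (fderiv ℝ (fderiv ℝ u)) y c a b := by
  rw [sym3bc hΩo hu hy a b c, sym3a hΩo hu hy a c]

def phiF (u : En n → ℝ) : En n → ℝ := fun y => u y - ∑ i, y i * Dg u y i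

lemma hasF_Dg_app (hy : y ∈ Ω) (i : Fin n) :
    HasFDerivAt (fun z => fderiv ℝ u z (sing i))
      ((fderiv ℝ (fderiv ℝ u) y).flip (sing i)) y := by
  have := (d1 hΩo hu hy).hasFDerivAt.clm_apply (hasFDerivAt_const (sing i) y)
  simpa using this

lemma hasF_phi (hy : y ∈ Ω) :
    HasFDerivAt (phiF u)
      (fderiv ℝ u y - ∑ i, (y i • ((fderiv ℝ (fderiv ℝ u) y).flip (sing i)) +
        (fderiv ℝ u y (sing i)) • (EuclideanSpace.proj i : En n →L[ℝ] ℝ))) y := by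
  apply HasFDerivAt.sub (d0 hΩo hu hy).hasFDerivAt
  apply HasFDerivAt.fun_sum
  intro i _
  have hA : HasFDerivAt (fun z : En n => z i) (EuclideanSpace.proj i : En n →L[ℝ] ℝ) y :=
    (EuclideanSpace.proj i : En n →L[ℝ] ℝ).hasFDerivAt
  have hB := hasF_Dg_app hΩo hu hy i
  exact hA.mul hB

lemma diff_phi (hy : y ∈ Ω) : DifferentiableAt ℝ (phiF u) y :=
  (hasF_phi hΩo hu hy).differentiableAt

lemma fderiv_phi_apply (hy : y ∈ Ω) (j : Fin n) :
    fderiv ℝ (phiF u) y (sing j) = -(fderiv ℝ (fderiv ℝ u) y (sing j) y) := by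
  rw [(hasF_phi hΩo hu hy).fderiv]
  simp only [ContinuousLinearMap.coe_sub', Pi.sub_apply, ContinuousLinearMap.coe_sum',
    Finset.sum_apply, ContinuousLinearMap.add_apply, ContinuousLinearMap.coe_smul',
    Pi.smul_apply, ContinuousLinearMap.flip_apply, smul_eq_mul]
  rw [Finset.sum_add_distrib]
  rw [← clm_expand (fderiv ℝ (fderiv ℝ u) y (sing j)) y]
  have hproj : ∀ i : Fin n, (EuclideanSpace.proj i : En n →L[ℝ] ℝ) (sing j)
      = if i = j then 1 else 0 := by
    intro i
    simp [sing, EuclideanSpace.single_apply]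
  have h2 : ∑ i, fderiv ℝ u y (sing i) * (EuclideanSpace.proj i : En n →L[ℝ] ℝ) (sing j)
      = fderiv ℝ u y (sing j) := by
    rw [Finset.sum_eq_single j]
    · simp [hproj]
    · intro i _ hij; rw [hproj i, if_neg hij]; ring
    · intro h; exact absurd (Finset.mem_univ j) h
  rw [h2]
  ring

lemma Dg_phi (hy : y ∈ Ω) (j : Fin n) :
    Dg (phiF u) y j = -(fderiv ℝ (fderiv ℝ u) y (sing j) y) :=
  fderiv_phi_apply hΩo hu hy j

lemma Dh_eq (hy : y ∈ Ω) (i j : Fin n) :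
    Dh u y i j = fderiv ℝ (fderiv ℝ u) y (sing i) (sing j) := by
  have h := (hasF_Dg_app hΩo hu hy j).fderiv
  show fderiv ℝ (fun z => fderiv ℝ u z (EuclideanSpace.single j 1)) y
      (EuclideanSpace.single i 1) = _
  have : (fun z => fderiv ℝ u z (EuclideanSpace.single j 1))
      = (fun z => fderiv ℝ u z (sing j)) := rfl
  rw [this, h]
  simp [sing]

lemma hasF_phi_inner (hy : y ∈ Ω) (j : Fin n) :
    HasFDerivAt (fun z => fderiv ℝ (phiF u) z (sing j))
      (-(((fderiv ℝ (fderiv ℝ u) y) (sing j)).comp (ContinuousLinearMap.id ℝ (En n)) +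
        (((fderiv ℝ (fderiv ℝ (fderiv ℝ u)) y).flip (sing j)).flip y))) y := by
  have hB : HasFDerivAt (fun z => fderiv ℝ (fderiv ℝ u) z (sing j))
      ((fderiv ℝ (fderiv ℝ (fderiv ℝ u)) y).flip (sing j)) y := by
    have := (d2 hΩo hu hy).hasFDerivAt.clm_apply (hasFDerivAt_const (sing j) y)
    simpa using this
  have hψ := (hB.clm_apply (hasFDerivAt_id y)).neg
  apply hψ.congr_of_eventuallyEq
  filter_upwards [hΩo.mem_nhds hy] with z hz
  rw [fderiv_phi_apply hΩo hu hz j]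
  rfl

lemma diff_phi_inner (hy : y ∈ Ω) (j : Fin n) :
    DifferentiableAt ℝ (fun z => fderiv ℝ (phiF u) z (sing j)) y :=
  (hasF_phi_inner hΩo hu hy j).differentiableAt

lemma Dh_phi (hy : y ∈ Ω) (i j : Fin n) :
    Dh (phiF u) y i j = -(fderiv ℝ (fderiv ℝ u) y (sing j) (sing i))
      - fderiv ℝ (fderiv ℝ (fderiv ℝ u)) y (sing i) (sing j) y := by
  show fderiv ℝ (fun z => fderiv ℝ (phiF u) z (EuclideanSpace.single j 1)) y
      (EuclideanSpace.single i 1) = _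
  have hrw : (fun z => fderiv ℝ (phiF u) z (EuclideanSpace.single j 1))
      = (fun z => fderiv ℝ (phiF u) z (sing j)) := rfl
  rw [hrw, (hasF_phi_inner hΩo hu hy j).fderiv]
  have : (EuclideanSpace.single i (1:ℝ)) = sing i := rfl
  rw [this]
  simp [ContinuousLinearMap.flip_apply]
  ring

lemma Dg_vt (hx : x ∈ Ω) (t : ℝ) (i : Fin n) :
    Dg (fun y => u y + t * phiF u y) x i = Dg u x i + t * Dg (phiF u) x i := by
  have h := (d0 hΩo hu hx).hasFDerivAt.fun_add (((diff_phi hΩo hu hx).hasFDerivAt).const_mul t)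
  show fderiv ℝ (fun y => u y + t * phiF u y) x (EuclideanSpace.single i 1) = _
  rw [h.fderiv]
  simp [Dg]

lemma Dh_vt (hx : x ∈ Ω) (t : ℝ) (i j : Fin n) :
    Dh (fun y => u y + t * phiF u y) x i j = Dh u x i j + t * Dh (phiF u) x i j := by
  have hev : (fun z => fderiv ℝ (fun y => u y + t * phiF u y) z (sing j)) =ᶠ[𝓝 x]
      (fun z => fderiv ℝ u z (sing j) + t * fderiv ℝ (phiF u) z (sing j)) := by
    filter_upwards [hΩo.mem_nhds hx] with z hz
    have h := (d0 hΩo hu hz).hasFDerivAt.fun_add (((diff_phi hΩo hu hz).hasFDerivAt).const_mul t)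
    rw [h.fderiv]
    simp
  show fderiv ℝ (fun z => fderiv ℝ (fun y => u y + t * phiF u y) z (EuclideanSpace.single j 1)) x
      (EuclideanSpace.single i 1) = _
  have hrw : (fun z => fderiv ℝ (fun y => u y + t * phiF u y) z (EuclideanSpace.single j 1))
      = (fun z => fderiv ℝ (fun y => u y + t * phiF u y) z (sing j)) := rfl
  rw [hrw, hev.fderiv_eq (𝕜 := ℝ)]
  have hd1 : DifferentiableAt ℝ (fun z => fderiv ℝ u z (sing j)) x :=
    (hasF_Dg_app hΩo hu hx j).differentiableAt
  have hd2 := diff_phi_inner hΩo hu hx j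
  rw [fderiv_fun_add hd1 (hd2.const_mul t), fderiv_const_mul hd2]
  simp [Dh, sing]


def zc (x : En n) : ℝ → En n := fun t => (1+t)⁻¹ • x

omit hΩo hu in
lemma zc_zero : zc x 0 = x := by simp [zc]

omit hΩo hu in
lemma hasDeriv_inv1 : HasDerivAt (fun t : ℝ => (1+t)⁻¹) (-1) 0 := by
  have h1 : HasDerivAt (fun t : ℝ => 1 + t) 1 0 := (hasDerivAt_id 0).const_add 1
  have := h1.fun_inv (by norm_num)
  simpa using this

omit hΩo hu in
lemma hasDeriv_zc : HasDerivAt (zc x) (-x) 0 := by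
  have := hasDeriv_inv1.smul_const x
  show HasDerivAt (fun t : ℝ => (1+t)⁻¹ • x) (-x) 0
  simpa using this

omit hu in
lemma eventually_zc_mem (hx : x ∈ Ω) : ∀ᶠ t in 𝓝 (0:ℝ), zc x t ∈ Ω := by
  have hzc : ContinuousAt (zc x) 0 := (hasDeriv_zc (x := x)).continuousAt
  have := hzc.preimage_mem_nhds (by rw [zc_zero]; exact hΩo.mem_nhds hx)
  filter_upwards [this] with t ht using ht

lemma hasDeriv_q0 (hx : x ∈ Ω) :
    HasDerivAt (fun t => (1+t) * u (zc x t)) (u x - fderiv ℝ u x x) 0 := by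
  have h1 : HasDerivAt (fun t : ℝ => 1 + t) 1 0 := (hasDerivAt_id 0).const_add 1
  have hu' : HasFDerivAt u (fderiv ℝ u x) (zc x 0) := by
    rw [zc_zero]; exact (d0 hΩo hu hx).hasFDerivAt
  have h2 : HasDerivAt (fun t => u (zc x t)) (fderiv ℝ u x (-x)) 0 :=
    hu'.comp_hasDerivAt 0 hasDeriv_zc
  have h3 := h1.mul h2
  have : (1:ℝ) * u (zc x 0) + (1 + 0) * (fderiv ℝ u x (-x)) = u x - fderiv ℝ u x x := by
    rw [zc_zero]; simp [sub_eq_add_neg]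
  rw [this] at h3
  exact h3

lemma hasDeriv_q1 (hx : x ∈ Ω) (i : Fin n) :
    HasDerivAt (fun t => Dg u (zc x t) i) (-(fderiv ℝ (fderiv ℝ u) x x (sing i))) 0 := by
  have hF : HasFDerivAt (fun z => fderiv ℝ u z (sing i))
      ((fderiv ℝ (fderiv ℝ u) x).flip (sing i)) (zc x 0) := by
    rw [zc_zero]; exact hasF_Dg_app hΩo hu hx i
  have h2 := hF.comp_hasDerivAt 0 hasDeriv_zc
  simpa [Dg, sing, Function.comp_def] using h2

lemma hasDeriv_q2 (hx : x ∈ Ω) (i j : Fin n) :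
    HasDerivAt (fun t => (1+t)⁻¹ * Dh u (zc x t) i j)
      (-(fderiv ℝ (fderiv ℝ u) x (sing i) (sing j))
        - fderiv ℝ (fderiv ℝ (fderiv ℝ u)) x x (sing i) (sing j)) 0 := by
  have hG : HasFDerivAt (fun z => fderiv ℝ (fderiv ℝ u) z (sing i) (sing j))
      (((fderiv ℝ (fderiv ℝ (fderiv ℝ u)) x).flip (sing i)).flip (sing j)) (zc x 0) := by
    rw [zc_zero]; exact hasF_D2app hΩo hu hx (sing i) (sing j)
  have h3 := hG.comp_hasDerivAt 0 hasDeriv_zc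
  have h4 := hasDeriv_inv1.mul h3
  have h5 := h4.congr_of_eventuallyEq (f₁ := fun t => (1+t)⁻¹ * Dh u (zc x t) i j) (by
    filter_upwards [eventually_zc_mem hΩo hx] with t ht
    rw [Dh_eq hΩo hu ht i j]
    rfl)
  refine h5.congr_deriv ?_
  simp only [Function.comp_apply, zc_zero]
  simp
  ring

omit hΩo hu in
lemma hasDeriv_affine (a b : ℝ) : HasDerivAt (fun t : ℝ => a + t * b) b 0 := by
  simpa using ((hasDerivAt_id (0:ℝ)).mul_const b).const_add a

/-- the data curves -/
def Pc (u : En n → ℝ) (x : En n) : ℝ → ℝ × (Fin n → ℝ) × (Fin n → Fin n → ℝ) :=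
  fun t => (u x + t * phiF u x,
            fun i => Dg u x i + t * Dg (phiF u) x i,
            fun i j => Dh u x i j + t * Dh (phiF u) x i j)

def Qc (u : En n → ℝ) (x : En n) : ℝ → ℝ × (Fin n → ℝ) × (Fin n → Fin n → ℝ) :=
  fun t => ((1+t) * u (zc x t),
            fun i => Dg u (zc x t) i,
            fun i j => (1+t)⁻¹ * Dh u (zc x t) i j)

omit hΩo hu in
lemma PQ_zero : Pc u x 0 = Qc u x 0 := by
  unfold Pc Qc
  rw [zc_zero]
  norm_num

def dP (u : En n → ℝ) (x : En n) : ℝ × (Fin n → ℝ) × (Fin n → Fin n → ℝ) :=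
  (phiF u x, fun i => Dg (phiF u) x i, fun i j => Dh (phiF u) x i j)

omit hΩo hu in
lemma hasDeriv_P : HasDerivAt (Pc u x) (dP u x) 0 := by
  apply HasDerivAt.prodMk (hasDeriv_affine _ _)
  apply HasDerivAt.prodMk
  · exact hasDerivAt_pi.mpr (fun i => hasDeriv_affine _ _)
  · apply hasDerivAt_pi.mpr; intro i
    exact hasDerivAt_pi.mpr (fun j => hasDeriv_affine _ _)

lemma hasDeriv_Q (hx : x ∈ Ω) : HasDerivAt (Qc u x) (dP u x) 0 := by
  have h0 : phiF u x = u x - fderiv ℝ u x x := by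
    unfold phiF
    rw [clm_expand (fderiv ℝ u x) x]
    rfl
  have h1 : ∀ i, Dg (phiF u) x i = -(fderiv ℝ (fderiv ℝ u) x x (sing i)) := by
    intro i
    rw [Dg_phi hΩo hu hx i, sym2 hΩo hu hx (sing i) x]
  have h2 : ∀ i j, Dh (phiF u) x i j = -(fderiv ℝ (fderiv ℝ u) x (sing i) (sing j))
      - fderiv ℝ (fderiv ℝ (fderiv ℝ u)) x x (sing i) (sing j) := by
    intro i j
    rw [Dh_phi hΩo hu hx i j, sym2 hΩo hu hx (sing j) (sing i),
      sym3 hΩo hu hx (sing i) (sing j) x]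
  apply HasDerivAt.prodMk
  · rw [h0]
    exact hasDeriv_q0 hΩo hu hx
  apply HasDerivAt.prodMk
  · apply hasDerivAt_pi.mpr; intro i
    rw [h1 i]
    exact hasDeriv_q1 hΩo hu hx i
  · apply hasDerivAt_pi.mpr; intro i
    apply hasDerivAt_pi.mpr; intro j
    rw [h2 i j]
    exact hasDeriv_q2 hΩo hu hx i j


lemma hAP (hx : x ∈ Ω) (t : ℝ) :
    hypA (fun y => u y + t * phiF u y) x = Matrix.of (HfunP (Pc u x t)) := by
  rw [hypA_eq]
  have hb : Dg (fun y => u y + t * phiF u y) x = (Pc u x t).2.1 := funext (Dg_vt hΩo hu hx t)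
  have hc : (fun i j => Dh (fun y => u y + t * phiF u y) x i j) = (Pc u x t).2.2 := by
    funext i j; exact Dh_vt hΩo hu hx t i j
  rw [hb, hc]
  rfl

omit hu in
lemma eventually_one_add_ne : ∀ᶠ t in 𝓝 (0:ℝ), (1:ℝ) + t ≠ 0 := by
  have hc : ContinuousAt (fun t : ℝ => 1 + t) 0 := by fun_prop
  have h0 : ((fun t : ℝ => 1 + t) 0) ∈ {s : ℝ | s ≠ 0} := by norm_num
  have := hc.preimage_mem_nhds (t := {s : ℝ | s ≠ 0}) (IsOpen.mem_nhds isOpen_ne h0)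
  filter_upwards [this] with t ht using ht

omit hΩo hu in
lemma hAQ_eq {t : ℝ} (ht : (1:ℝ) + t ≠ 0) :
    hypA u (zc x t) = Matrix.of (HfunP (Qc u x t)) := by
  rw [hypA_eq]
  have : Matrix.of (HfunP (Qc u x t)) = Hfun ((1+t) * u (zc x t))
      (fun i => Dg u (zc x t) i) (fun i j => (1+t)⁻¹ * Dh u (zc x t) i j) := rfl
  rw [this]
  exact (Hfun_scale ht _ _ _).symm

omit hΩo hu in
lemma vt_zero : (fun y => u y + (0:ℝ) * phiF u y) = u := by funext y; ring

lemma Dh_symm_u (hy : y ∈ Ω) (i j : Fin n) : Dh u y i j = Dh u y j i := by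
  rw [Dh_eq hΩo hu hy i j, Dh_eq hΩo hu hy j i, sym2 hΩo hu hy]

lemma Dh_symm_phi (hx : x ∈ Ω) (i j : Fin n) :
    Dh (phiF u) x i j = Dh (phiF u) x j i := by
  rw [Dh_phi hΩo hu hx i j, Dh_phi hΩo hu hx j i,
    sym2 hΩo hu hx (sing j) (sing i), sym3a hΩo hu hx (sing i) (sing j)]

lemma hermP (hx : x ∈ Ω) (t : ℝ) : (Matrix.of (HfunP (Pc u x t))).IsHermitian := by
  apply Hfun_herm
  intro i j
  show Dh u x i j + t * Dh (phiF u) x i j = Dh u x j i + t * Dh (phiF u) x j i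
  rw [Dh_symm_u hΩo hu hx i j, Dh_symm_phi hΩo hu hx i j]

lemma hermQ (hzt : zc x t ∈ Ω) : (Matrix.of (HfunP (Qc u x t))).IsHermitian := by
  apply Hfun_herm
  intro i j
  show (1+t)⁻¹ * Dh u (zc x t) i j = (1+t)⁻¹ * Dh u (zc x t) j i
  rw [Dh_symm_u hΩo hu hzt i j]

end DerivSec

lemma key_dist {n : ℕ} {A B : Matrix (Fin n) (Fin n) ℝ} (hA : A.IsHermitian)
    (hB : B.IsHermitian) : ‖sortv (eigenvals A) - sortv (eigenvals B)‖ ≤ entSum (A - B) := by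
  simp only [eigenvals, dif_pos hA, dif_pos hB]
  rw [pi_norm_le_iff_of_nonneg (entSum_nonneg _)]
  intro k
  rw [Pi.sub_apply, Real.norm_eq_abs]
  exact weyl_abs hA hB k

lemma entSum_le_pi {n : ℕ} (c c' : Fin n → Fin n → ℝ) :
    entSum (Matrix.of c - Matrix.of c') ≤ ((n:ℝ)^2) * ‖c - c'‖ := by
  have h1 : ∀ i j, |(Matrix.of c - Matrix.of c') i j| ≤ ‖c - c'‖ := by
    intro i j
    have h2 : ‖(c - c') i j‖ ≤ ‖(c - c') i‖ := norm_le_pi_norm ((c - c') i) j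
    have h3 : ‖(c - c') i‖ ≤ ‖c - c'‖ := norm_le_pi_norm (c - c') i
    have : (Matrix.of c - Matrix.of c') i j = (c - c') i j := rfl
    rw [this]
    calc |(c - c') i j| = ‖(c - c') i j‖ := (Real.norm_eq_abs _).symm
    _ ≤ ‖c - c'‖ := le_trans h2 h3
  calc entSum (Matrix.of c - Matrix.of c') ≤ ∑ i : Fin n, ∑ j : Fin n, ‖c - c'‖ := by
        apply Finset.sum_le_sum; intro i _; apply Finset.sum_le_sum; intro j _; exact h1 i j
  _ = ((n:ℝ)^2) * ‖c - c'‖ := by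
      simp [Finset.sum_const]
      ring

lemma f_sortv {n : ℕ} {f : (Fin n → ℝ) → ℝ} (hf : IsCurvatureFunction n f) (v : Fin n → ℝ) :
    f (sortv v) = f v := hf.symm (Tuple.sort v) v

lemma posCone_open {n : ℕ} : IsOpen (posCone n) := by
  have : posCone n = ⋂ i, {l : Fin n → ℝ | 0 < l i} := by
    ext l; simp [posCone]
  rw [this]
  exact isOpen_iInter_of_finite fun i => isOpen_lt continuous_const (continuous_apply i)


lemma tendsto_aux {α : Type*} [NormedAddCommGroup α] {h : ℝ → α} (hc : ContinuousAt h 0)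
    (C : ℝ) {ε : ℝ} (hε : 0 < ε) : ∀ᶠ t in 𝓝 (0:ℝ), C * ‖h t - h 0‖ < ε := by
  have h1 : Tendsto (fun t => C * ‖h t - h 0‖) (𝓝 0) (𝓝 (C * ‖h 0 - h 0‖)) :=
    ((hc.sub continuousAt_const).norm).const_mul C
  have h2 : (C * ‖h 0 - h 0‖) = 0 := by simp
  rw [h2] at h1
  exact h1.eventually_lt_const hε

theorem main_core {n : ℕ} (hn : 2 ≤ n) (f : (Fin n → ℝ) → ℝ) (hf : IsCurvatureFunction n f)
    (Ω : Set (En n)) (hΩo : IsOpen Ω) (σ : ℝ) (u : En n → ℝ)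
    (hu : ContDiffOn ℝ (⊤ : ℕ∞) u Ω)
    (hupos : ∀ x ∈ Ω, 0 < u x)
    (hupd : ∀ x ∈ Ω, (hypA u x).PosDef)
    (hueq : ∀ x ∈ Ω, f (eigenvals (hypA u x)) = σ)
    (x : En n) (hx : x ∈ Ω) :
    ∃ δ > (0 : ℝ),
      (∀ t : ℝ, |t| < δ →
        0 < u x + t * (u x - ∑ i, x i * Dg u x i) ∧
        (hypA (fun y => u y + t * (u y - ∑ i, y i * Dg u y i)) x).PosDef) ∧
      HasDerivAt (fun t : ℝ =>
        f (eigenvals (hypA (fun y => u y + t * (u y - ∑ i, y i * Dg u y i)) x))) 0 0 := by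
  classical
  show ∃ δ > (0 : ℝ),
      (∀ t : ℝ, |t| < δ →
        0 < u x + t * phiF u x ∧
        (hypA (fun y => u y + t * phiF u y) x).PosDef) ∧
      HasDerivAt (fun t : ℝ =>
        f (eigenvals (hypA (fun y => u y + t * phiF u y) x))) 0 0
  have hnempty : Nonempty (Fin n) := ⟨⟨0, by omega⟩⟩
  have hermP' : ∀ t, (Matrix.of (HfunP (Pc u x t))).IsHermitian := hermP hΩo hu hx
  have hA0eq : Matrix.of (HfunP (Pc u x 0)) = hypA u x := by
    rw [← hAP hΩo hu hx 0, vt_zero]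
  have hpd0 : (Matrix.of (HfunP (Pc u x 0))).PosDef := by rw [hA0eq]; exact hupd x hx
  set lamP : ℝ → Fin n → ℝ := fun t => sortv (eigenvals (Matrix.of (HfunP (Pc u x t))))
    with hlamP
  set lamQ : ℝ → Fin n → ℝ := fun t => sortv (eigenvals (Matrix.of (HfunP (Qc u x t))))
    with hlamQ
  have hμpos : ∀ k, 0 < lamP 0 k := by
    intro k
    have h1 : eigenvals (Matrix.of (HfunP (Pc u x 0))) = (hermP' 0).eigenvalues :=
      dif_pos (hermP' 0)
    rw [hlamP]
    simp only [h1]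
    exact hpd0.eigenvalues_pos _
  have hμcone : lamP 0 ∈ posCone n := hμpos
  have hfC1 : ContDiffAt ℝ 1 f (lamP 0) := by
    have := (hf.smooth.contDiffAt (posCone_open.mem_nhds hμcone))
    exact this.of_le one_le_top'
  obtain ⟨Kf, sf, hsf, hfLip⟩ := hfC1.exists_lipschitzOnWith
  obtain ⟨rf, hrf, hrball⟩ := Metric.mem_nhds_iff.mp hsf
  have hHC1 : ContDiffAt ℝ 1 (HfunP (n := n)) (Pc u x 0) :=
    contDiff_HfunP.contDiffAt.of_le le_top
  obtain ⟨KH, sH, hsH, hHLip⟩ := hHC1.exists_lipschitzOnWith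
  set μmin := Finset.univ.inf' Finset.univ_nonempty (lamP 0) with hμmin
  have hμminpos : 0 < μmin := by
    rw [hμmin, Finset.lt_inf'_iff]
    exact fun i _ => hμpos i
  have hμminle : ∀ k, μmin ≤ lamP 0 k := fun k =>
    Finset.inf'_le _ (Finset.mem_univ k)
  set ε1 := min rf μmin with hε1
  have hε1pos : 0 < ε1 := lt_min hrf hμminpos
  have hcontP : ContinuousAt (fun t => HfunP (Pc u x t)) 0 :=
    (contDiff_HfunP.continuous.continuousAt).comp (hasDeriv_P).continuousAt
  have hcontQ : ContinuousAt (fun t => HfunP (Qc u x t)) 0 :=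
    (contDiff_HfunP.continuous.continuousAt).comp (hasDeriv_Q hΩo hu hx).continuousAt
  have hPQ0 : Pc u x 0 = Qc u x 0 := PQ_zero
  have Emem : ∀ᶠ t in 𝓝 (0:ℝ), zc x t ∈ Ω := eventually_zc_mem hΩo hx
  have Ene : ∀ᶠ t in 𝓝 (0:ℝ), (1:ℝ) + t ≠ 0 := eventually_one_add_ne (Ω := Ω) hΩo
  have EdistP : ∀ᶠ t in 𝓝 (0:ℝ), ‖lamP t - lamP 0‖ < ε1 := by
    filter_upwards [tendsto_aux hcontP ((n:ℝ)^2) hε1pos] with t hlt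
    calc ‖lamP t - lamP 0‖ ≤ entSum (Matrix.of (HfunP (Pc u x t)) - Matrix.of (HfunP (Pc u x 0)))
        := key_dist (hermP' t) (hermP' 0)
    _ ≤ ((n:ℝ)^2) * ‖HfunP (Pc u x t) - HfunP (Pc u x 0)‖ := entSum_le_pi _ _
    _ < ε1 := hlt
  have EdistQ : ∀ᶠ t in 𝓝 (0:ℝ), ‖lamQ t - lamP 0‖ < ε1 := by
    filter_upwards [tendsto_aux hcontQ ((n:ℝ)^2) hε1pos, Emem] with t hlt hzt
    calc ‖lamQ t - lamP 0‖ ≤ entSum (Matrix.of (HfunP (Qc u x t)) - Matrix.of (HfunP (Pc u x 0)))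
        := key_dist (hermQ hΩo hu hzt) (hermP' 0)
    _ ≤ ((n:ℝ)^2) * ‖HfunP (Qc u x t) - HfunP (Pc u x 0)‖ := entSum_le_pi _ _
    _ = ((n:ℝ)^2) * ‖HfunP (Qc u x t) - HfunP (Qc u x 0)‖ := by rw [hPQ0]
    _ < ε1 := hlt
  have EsHP : ∀ᶠ t in 𝓝 (0:ℝ), Pc u x t ∈ sH := by
    filter_upwards [(hasDeriv_P (u := u) (x := x)).continuousAt.preimage_mem_nhds hsH]
      with t ht using ht
  have EsHQ : ∀ᶠ t in 𝓝 (0:ℝ), Qc u x t ∈ sH := by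
    have hsH' : sH ∈ 𝓝 (Qc u x 0) := by rw [← hPQ0]; exact hsH
    filter_upwards [(hasDeriv_Q hΩo hu hx).continuousAt.preimage_mem_nhds hsH']
      with t ht using ht
  -- eventual pos def
  have EposP : ∀ᶠ t in 𝓝 (0:ℝ), (hypA (fun y => u y + t * phiF u y) x).PosDef := by
    filter_upwards [EdistP] with t h
    rw [hAP hΩo hu hx t]
    apply posDef_of_sortv_pos (hermP' t)
    intro k
    have h2 : |lamP t k - lamP 0 k| ≤ ‖lamP t - lamP 0‖ := by
      rw [← Real.norm_eq_abs]
      exact norm_le_pi_norm (lamP t - lamP 0) k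
    have h3 : ε1 ≤ μmin := min_le_right _ _
    have h4 := hμminle k
    have h5 : |lamP t k - lamP 0 k| < lamP 0 k := by
      calc |lamP t k - lamP 0 k| ≤ ‖lamP t - lamP 0‖ := h2
      _ < ε1 := h
      _ ≤ lamP 0 k := le_trans h3 h4
    have h6 : 0 < lamP t k := by
      have := abs_lt.mp h5
      linarith [this.1]
    have h7 : eigenvals (Matrix.of (HfunP (Pc u x t))) = (hermP' t).eigenvalues :=
      dif_pos (hermP' t)
    have h8 : lamP t k = sortv ((hermP' t).eigenvalues) k := by rw [hlamP]; simp only [h7]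
    rw [h8] at h6
    exact h6
  -- curve difference is o(t)
  have hR : HasDerivAt (fun t => Pc u x t - Qc u x t) 0 0 := by
    have := (hasDeriv_P (u := u) (x := x)).fun_sub (hasDeriv_Q hΩo hu hx)
    simpa using this
  have hRo : (fun t => Pc u x t - Qc u x t) =o[𝓝 (0:ℝ)] (fun t : ℝ => t) := by
    have h1 := hasDerivAt_iff_isLittleO.mp hR
    simp only [sub_zero, smul_zero, sub_self] at h1
    have h2 : (fun t => Pc u x t - Qc u x t - (Pc u x 0 - Qc u x 0)) =
        (fun t => Pc u x t - Qc u x t) := by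
      funext t; rw [hPQ0]; simp
    rwa [h2] at h1
  -- g and its bound
  have hg0 : f (eigenvals (hypA (fun y => u y + (0:ℝ) * phiF u y) x)) = σ := by
    rw [vt_zero]; exact hueq x hx
  have EgQ : ∀ᶠ t in 𝓝 (0:ℝ), f (eigenvals (Matrix.of (HfunP (Qc u x t)))) = σ := by
    filter_upwards [Emem, Ene] with t hzt hne
    rw [← hAQ_eq hne]
    exact hueq _ hzt
  have Ebound : ∀ᶠ t in 𝓝 (0:ℝ),
      ‖f (eigenvals (hypA (fun y => u y + t * phiF u y) x)) -
        f (eigenvals (hypA (fun y => u y + (0:ℝ) * phiF u y) x))‖ ≤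
      ((Kf : ℝ) * (((n:ℝ)^2) * (KH : ℝ))) * ‖Pc u x t - Qc u x t‖ := by
    filter_upwards [EdistP, EdistQ, EsHP, EsHQ, EgQ, Emem] with t h1 h2 h3 h4 h5 hzt
    have hfP : f (eigenvals (Matrix.of (HfunP (Pc u x t)))) = f (lamP t) :=
      (f_sortv hf _).symm
    have hfQ : f (eigenvals (Matrix.of (HfunP (Qc u x t)))) = f (lamQ t) :=
      (f_sortv hf _).symm
    have hgt : f (eigenvals (hypA (fun y => u y + t * phiF u y) x)) -
        f (eigenvals (hypA (fun y => u y + (0:ℝ) * phiF u y) x)) = f (lamP t) - f (lamQ t) := by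
      rw [hg0, hAP hΩo hu hx t, hfP, ← hfQ, ← h5]
    rw [hgt]
    have hmem1 : lamP t ∈ sf := hrball (by
      rw [Metric.mem_ball, dist_eq_norm]
      exact lt_of_lt_of_le h1 (min_le_left _ _))
    have hmem2 : lamQ t ∈ sf := hrball (by
      rw [Metric.mem_ball, dist_eq_norm]
      exact lt_of_lt_of_le h2 (min_le_left _ _))
    have hL1 : dist (f (lamP t)) (f (lamQ t)) ≤ (Kf : ℝ) * dist (lamP t) (lamQ t) :=
      hfLip.dist_le_mul _ hmem1 _ hmem2
    have hW : dist (lamP t) (lamQ t) ≤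
        entSum (Matrix.of (HfunP (Pc u x t)) - Matrix.of (HfunP (Qc u x t))) := by
      rw [dist_eq_norm]
      exact key_dist (hermP' t) (hermQ hΩo hu hzt)
    have hE := entSum_le_pi (HfunP (Pc u x t)) (HfunP (Qc u x t))
    have hH : dist (HfunP (Pc u x t)) (HfunP (Qc u x t)) ≤
        (KH : ℝ) * dist (Pc u x t) (Qc u x t) := hHLip.dist_le_mul _ h3 _ h4
    rw [← dist_eq_norm, ← dist_eq_norm]
    calc dist (f (lamP t)) (f (lamQ t)) ≤ (Kf : ℝ) * dist (lamP t) (lamQ t) := hL1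
    _ ≤ (Kf : ℝ) * entSum (Matrix.of (HfunP (Pc u x t)) - Matrix.of (HfunP (Qc u x t))) := by
        apply mul_le_mul_of_nonneg_left hW (by positivity)
    _ ≤ (Kf : ℝ) * (((n:ℝ)^2) * ‖HfunP (Pc u x t) - HfunP (Qc u x t)‖) := by
        apply mul_le_mul_of_nonneg_left hE (by positivity)
    _ ≤ (Kf : ℝ) * (((n:ℝ)^2) * ((KH : ℝ) * dist (Pc u x t) (Qc u x t))) := by
        apply mul_le_mul_of_nonneg_left _ (by positivity)
        apply mul_le_mul_of_nonneg_left _ (by positivity)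
        rw [← dist_eq_norm]
        exact hH
    _ = ((Kf : ℝ) * (((n:ℝ)^2) * (KH : ℝ))) * dist (Pc u x t) (Qc u x t) := by ring
  have hgO : (fun t => f (eigenvals (hypA (fun y => u y + t * phiF u y) x)) -
      f (eigenvals (hypA (fun y => u y + (0:ℝ) * phiF u y) x)))
      =O[𝓝 (0:ℝ)] (fun t => Pc u x t - Qc u x t) :=
    Asymptotics.isBigO_iff.mpr ⟨_, Ebound⟩
  have hgo := hgO.trans_isLittleO hRo
  have hder : HasDerivAt (fun t : ℝ =>
      f (eigenvals (hypA (fun y => u y + t * phiF u y) x))) 0 0 := by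
    rw [hasDerivAt_iff_isLittleO]
    simp only [sub_zero, smul_zero]
    exact hgo
  -- extract δ
  obtain ⟨ε, hεpos, hεball⟩ := Metric.eventually_nhds_iff.mp EposP
  refine ⟨min ε (u x / (|phiF u x| + 1)), ?_, ?_, hder⟩
  · apply lt_min hεpos
    apply div_pos (hupos x hx)
    positivity
  · intro t ht
    constructor
    · have h1 : |t| < u x / (|phiF u x| + 1) := lt_of_lt_of_le ht (min_le_right _ _)
      have h2 : |t| * (|phiF u x| + 1) < u x := by
        rw [← lt_div_iff₀ (by positivity)]
        exact h1
      have h3 : |t * phiF u x| ≤ |t| * (|phiF u x| + 1) := by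
        rw [abs_mul]
        have := abs_nonneg t
        nlinarith [abs_nonneg (phiF u x)]
      have h4 := neg_abs_le (t * phiF u x)
      linarith
    · apply hεball
      rw [Real.dist_0_eq_abs]
      exact lt_of_lt_of_le ht (min_le_left _ _)


end S10
end


/-- **Lemma 6.1**: for a locally strictly convex solution of `f(κ[u]) = σ`, the function
`φ = u − x·Du` lies in the kernel of the linearized operator: at every `x ∈ Ω` the map
`t ↦ f(κ[u + tφ](x))` is defined near `t = 0` (positivity and local strict convexity persist)
and has vanishing derivative at `t = 0`. -/

theorem stmt_10 (n : ℕ) (hn : 2 ≤ n)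
    (f : (Fin n → ℝ) → ℝ) (hf : IsCurvatureFunction n f)
    (Ω : Set (En n)) (hΩo : IsOpen Ω) (hΩconn : IsConnected Ω)
    (σ : ℝ) (u : En n → ℝ) (hu : ContDiffOn ℝ (⊤ : ℕ∞) u Ω)
    (hupos : ∀ x ∈ Ω, 0 < u x) (hupd : ∀ x ∈ Ω, (hypA u x).PosDef)
    (hueq : ∀ x ∈ Ω, f (eigenvals (hypA u x)) = σ) :
    ∀ x ∈ Ω, ∃ δ > (0 : ℝ),
      (∀ t : ℝ, |t| < δ →
        0 < u x + t * (u x - ∑ i, x i * Dg u x i) ∧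
        (hypA (fun y => u y + t * (u y - ∑ i, y i * Dg u y i)) x).PosDef) ∧
      HasDerivAt (fun t : ℝ =>
        f (eigenvals (hypA (fun y => u y + t * (u y - ∑ i, y i * Dg u y i)) x))) 0 0 := by
  intro x hx
  exact S10.main_core hn f hf Ω hΩo σ u hu hupos hupd hueq x hx
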